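/- Let L be a finite atomic meet-semilattice and G a building set in L. Then the nested set complex N(L,G) is homeomorphic (as a simplicial complex, via its geometric realization) to the order complex Δ(L \ {0̂}). -/

import Mathlib

open scoped BigOperators

variable {L : Type*}

/-- The set of maximal elements of `G` below `X` (the `G`-factors of `X`). -/
def factorsSet [PartialOrder L] (G : Set L) (X : L) : Set L :=
  {g | g ∈ G ∧ g ≤ X ∧ ∀ h ∈ G, h ≤ X → g ≤ h → g = h}

/-- `G` is a building set in the meet-semilattice `L` with minimal element `⊥`:
every element of `G` is nonminimal, and for every `X ≠ ⊥` there is a poset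
isomorphism from the product of the lower intervals of the factors of `X`
to the lower interval of `X`, sending the `g`-th "unit vector" to `g`. -/
def IsBuilding (L : Type*) [PartialOrder L] [OrderBot L] (G : Set L) : Prop :=
  (∀ g ∈ G, g ≠ ⊥) ∧
  ∀ X : L, X ≠ ⊥ →
    ∃ φ : ((g : factorsSet G X) → Set.Icc (⊥ : L) g.1) ≃o Set.Icc (⊥ : L) X,
      ∀ (g : factorsSet G X) (u : (h : factorsSet G X) → Set.Icc (⊥ : L) h.1),
        (u g : L) = g.1 → (∀ h, h ≠ g → (u h : L) = (⊥ : L)) → ((φ u : L) = g.1)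

/-- A finite subset `S ⊆ G` is nested: every antichain in `S` of size at least 2
has a least upper bound in `L` which does not belong to `G`. -/
def IsNested [PartialOrder L] (G : Set L) (S : Finset L) : Prop :=
  ↑S ⊆ G ∧ ∀ A : Finset L, A ⊆ S → IsAntichain (· ≤ ·) (A : Set L) → 2 ≤ A.card →
    ∃ j, IsLUB (A : Set L) j ∧ j ∉ G

/-- The nested set complex, as the collection of its faces. -/
def nestedComplex [PartialOrder L] (G : Set L) : Set (Finset L) := {S | IsNested G S}

/-- The order complex of a poset: the collection of finite chains. -/
def chainComplex (V : Type*) [Preorder V] : Set (Finset V) :=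
  {S | IsChain (· ≤ ·) (S : Set V)}

/-- The order complex of `L \ {⊥}`, with vertex set inside `L`. -/
def orderComplexBot (L : Type*) [PartialOrder L] [OrderBot L] : Set (Finset L) :=
  {S | (S : Set L) ⊆ {x | x ≠ ⊥} ∧ IsChain (· ≤ ·) (S : Set L)}

/-- Geometric realization of an abstract simplicial complex (given by its set of
faces, as finsets of the vertex type `V`): convex combinations of vertices
supported on a face. -/
abbrev geomReal {V : Type*} (K : Set (Finset V)) : Type _ :=
  {f : V → ℝ // (∀ v, 0 ≤ f v) ∧ ∃ s ∈ K, (∀ v, f v ≠ 0 → v ∈ s) ∧ ∑ v ∈ s, f v = 1}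

/-- The subposet of the face poset of the nested set complex consisting of the
nonempty nested sets whose join is `≤ X`. -/
def NestedFiber [PartialOrder L] (G : Set L) (X : L) :=
  {S : Finset L // IsNested G S ∧ S.Nonempty ∧ ∃ j, IsLUB (S : Set L) j ∧ j ≤ X}

instance [PartialOrder L] (G : Set L) (X : L) : PartialOrder (NestedFiber G X) := by
  unfold NestedFiber; infer_instance

/-- The face poset of the nested set complex: nonempty nested sets ordered by inclusion. -/
def NestedFaces [PartialOrder L] (G : Set L) :=
  {S : Finset L // IsNested G S ∧ S.Nonempty}

instance [PartialOrder L] (G : Set L) : PartialOrder (NestedFaces G) := by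
  unfold NestedFaces; infer_instance

/-- The combinatorial blowup of a poset `M` at `X`: elements `Y` (marked `false`)
with `Y ≱ X`, and elements `Ŷ` (marked `true`) with `Y ≱ X` such that `Y ∨ X`
exists; ordered by `Y ≺ Z` iff `Y < Z`, `Ŷ ≺ Ẑ` iff `Y < Z`, `Y ≺ Ẑ` iff `Y ≤ Z`. -/
def Bl {M : Type*} [PartialOrder M] (X : M) :=
  {p : M × Bool // ¬ X ≤ p.1 ∧ (p.2 = true → ∃ j, IsLUB {p.1, X} j)}

noncomputable instance {M : Type*} [PartialOrder M] (X : M) : PartialOrder (Bl X) := by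
  unfold Bl; infer_instance

/-- The atoms of `L`, used as coordinates for the realization of nested set fans. -/
def Atoms (L : Type*) [PartialOrder L] [OrderBot L] := {a : L // IsAtom a}

open Classical in
/-- The characteristic vector of the set of atoms below `X`. -/
noncomputable def charVec [PartialOrder L] [OrderBot L] (X : L) : Atoms L → ℝ :=
  fun a => if a.1 ≤ X then 1 else 0

/-- The polyhedral cone spanned by the characteristic vectors of elements of `S`. -/
noncomputable def coneOf [PartialOrder L] [OrderBot L] (S : Finset L) : Set (Atoms L → ℝ) :=
  {y | ∃ c : L → ℝ, (∀ x, 0 ≤ c x) ∧ y = ∑ x ∈ S, c x • charVec x}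

/-- The fan associated to a building set: the cones spanned by the nested sets. -/
def fanOf [PartialOrder L] [OrderBot L] (G : Set L) : Set (Set (Atoms L → ℝ)) :=
  {C | ∃ S : Finset L, IsNested G S ∧ C = coneOf S}

/-- The cone generated by a ray `v` together with a cone `c`. -/
def rayJoin {E : Type*} [AddCommMonoid E] [Module ℝ E] (v : E) (c : Set E) : Set E :=
  {y | ∃ a : ℝ, ∃ x ∈ c, 0 ≤ a ∧ y = a • v + x}

/-- The stellar subdivision of a fan `F` at the cone `σ` with new ray `v`:
cones not containing `σ` are kept, and each cone `τ ⊇ σ` is replaced by the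
joins of `v` with the faces of `τ` not containing `σ`. -/
def stellarSub {E : Type*} [AddCommMonoid E] [Module ℝ E]
    (F : Set (Set E)) (σ : Set E) (v : E) : Set (Set E) :=
  {τ | τ ∈ F ∧ ¬ σ ⊆ τ} ∪
  {D | ∃ τ ∈ F, σ ⊆ τ ∧ ∃ c ∈ F, c ⊆ τ ∧ ¬ σ ⊆ c ∧ D = rayJoin v c}


/-! ### Auxiliary development -/

namespace Stmt18Aux

attribute [local instance] Classical.propDecidable

variable {L : Type*} [SemilatticeInf L] [OrderBot L] [Fintype L] {G : Set L}
set_option linter.unusedSectionVars false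
set_option linter.unusedVariables false

/-- In a finite meet-semilattice, every set bounded above has a least upper bound,
below the given bound. -/
lemma exists_isLUB_le {A : Set L} {X : L} (hub : X ∈ upperBounds A) :
    ∃ j, IsLUB A j ∧ j ≤ X := by
  classical
  set s : Finset L := Finset.univ.filter (· ∈ upperBounds A) with hs
  have hXs : X ∈ s := by simp [hs, hub]
  have hne : s.Nonempty := ⟨X, hXs⟩
  refine ⟨s.inf' hne id, ⟨?_, ?_⟩, ?_⟩
  · intro a ha
    exact Finset.le_inf' hne id fun b hb => (Finset.mem_filter.mp hb).2 ha
  · intro z hz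
    exact Finset.inf'_le id (by simp [hs, hz])
  · exact Finset.inf'_le id hXs

lemma factorsSet_subset : factorsSet G X ⊆ G := fun g hg => hg.1

/-- Existence of a factor above any `G`-element below `X`. -/
lemma factor_exists {a X : L} (ha : a ∈ G) (haX : a ≤ X) :
    ∃ h, h ∈ factorsSet G X ∧ a ≤ h := by
  classical
  set s : Finset L := Finset.univ.filter (fun g => g ∈ G ∧ g ≤ X ∧ a ≤ g) with hs
  have has : a ∈ s := by simp [hs, ha, haX]
  obtain ⟨m, hm, hmax⟩ := s.exists_maximal ⟨a, has⟩
  rw [hs, Finset.mem_filter] at hm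
  refine ⟨m, ⟨hm.2.1, hm.2.2.1, ?_⟩, hm.2.2.2⟩
  intro h hh hhX hmh
  by_contra hne
  exact hne (le_antisymm hmh (hmax (by simp [hs, hh, hhX, le_trans hm.2.2.2 hmh]) hmh))

/-- `factorsSet G g = {g}` for `g ∈ G`. -/
lemma factorsSet_self {g : L} (hg : g ∈ G) : factorsSet G g = {g} := by
  ext h
  constructor
  · rintro ⟨hhG, hhg, hmax⟩
    exact hmax g hg le_rfl hhg
  · rintro rfl
    exact ⟨hg, le_rfl, fun h hh hhg hgh => le_antisymm hgh hhg⟩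

variable {X : L}

/-- The unit vector in the product of lower intervals of the factors. -/
noncomputable def unitv (G : Set L) (X : L) (g0 : factorsSet G X) :
    (g : factorsSet G X) → Set.Icc (⊥ : L) g.1 :=
  fun g => if g = g0 then ⟨g.1, bot_le, le_rfl⟩ else ⟨⊥, le_rfl, bot_le⟩

/-- The top vector in the product of lower intervals of the factors. -/
noncomputable def topv (G : Set L) (X : L) :
    (g : factorsSet G X) → Set.Icc (⊥ : L) g.1 :=
  fun g => ⟨g.1, bot_le, le_rfl⟩

/-- The bottom vector in the product of lower intervals of the factors. -/
noncomputable def botv (G : Set L) (X : L) :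
    (g : factorsSet G X) → Set.Icc (⊥ : L) g.1 :=
  fun g => ⟨⊥, le_rfl, bot_le⟩

section Phi

variable (φ : ((g : factorsSet G X) → Set.Icc (⊥ : L) g.1) ≃o Set.Icc (⊥ : L) X)

lemma phi_unitv
    (hu : ∀ (g : factorsSet G X) (u : (h : factorsSet G X) → Set.Icc (⊥ : L) h.1),
        (u g : L) = g.1 → (∀ h, h ≠ g → (u h : L) = (⊥ : L)) → ((φ u : L) = g.1))
    (g0 : factorsSet G X) : (φ (unitv G X g0) : L) = g0.1 :=
  hu g0 _ (by simp [unitv]) (fun h hh => by simp [unitv, hh])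

lemma le_topv (v : (g : factorsSet G X) → Set.Icc (⊥ : L) g.1) : v ≤ topv G X :=
  fun g => Subtype.coe_le_coe.mp (v g).2.2

lemma botv_le (v : (g : factorsSet G X) → Set.Icc (⊥ : L) g.1) : botv G X ≤ v :=
  fun g => Subtype.coe_le_coe.mp (v g).2.1

lemma phi_topv : (φ (topv G X) : L) = X := by
  refine le_antisymm (φ (topv G X)).2.2 ?_
  have h1 : φ (φ.symm ⟨X, bot_le, le_rfl⟩) ≤ φ (topv G X) :=
    φ.monotone (le_topv _)
  rw [φ.apply_symm_apply] at h1
  exact h1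

lemma phi_botv : (φ (botv G X) : L) = ⊥ := by
  refine le_antisymm ?_ (φ (botv G X)).2.1
  have h1 : φ (botv G X) ≤ φ (φ.symm ⟨⊥, le_rfl, bot_le⟩) :=
    φ.monotone (botv_le _)
  rw [φ.apply_symm_apply] at h1
  exact h1

end Phi

lemma factorsSet_nonempty (hG : IsBuilding L G) (hX : X ≠ ⊥)
    (hLUB : IsLUB (factorsSet G X) X) : (factorsSet G X).Nonempty := by
  rcases Set.eq_empty_or_nonempty (factorsSet G X) with h | h
  · exfalso
    apply hX
    have : X ≤ ⊥ := hLUB.2 (by simp [h, upperBounds])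
    exact le_bot_iff.mp this
  · exact h

lemma isLUB_factorsSet (hG : IsBuilding L G) (hX : X ≠ ⊥) :
    IsLUB (factorsSet G X) X := by
  obtain ⟨φ, hu⟩ := hG.2 X hX
  constructor
  · intro g hg
    have h1 := phi_unitv φ hu ⟨g, hg⟩
    calc g = (φ (unitv G X ⟨g, hg⟩) : L) := h1.symm
    _ ≤ X := (φ (unitv G X ⟨g, hg⟩)).2.2
  · intro Z hZ
    set w : Set.Icc (⊥ : L) X := ⟨X ⊓ Z, bot_le, inf_le_left⟩ with hw
    have hge : topv G X ≤ φ.symm w := by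
      intro g
      have l1 : unitv G X g ≤ φ.symm w := by
        rw [OrderIso.le_symm_apply]
        refine Subtype.coe_le_coe.mp ?_
        rw [phi_unitv φ hu g]
        exact le_inf g.2.2.1 (hZ g.2)
      have l2 := l1 g
      simpa [unitv, topv] using l2
    have h2 : φ (topv G X) ≤ w := by
      have := φ.monotone hge
      rwa [φ.apply_symm_apply] at this
    have h3 : (φ (topv G X) : L) ≤ X ⊓ Z := Subtype.coe_le_coe.mpr h2
    rw [phi_topv φ] at h3
    exact le_trans h3 inf_le_right

/-- Factors above a common nonbottom element coincide. -/
lemma factor_unique (hG : IsBuilding L G) (hX : X ≠ ⊥) {a : L} (ha : a ∈ G)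
    {h1 h2 : L} (hh1 : h1 ∈ factorsSet G X) (hh2 : h2 ∈ factorsSet G X)
    (ha1 : a ≤ h1) (ha2 : a ≤ h2) : h1 = h2 := by
  obtain ⟨φ, hu⟩ := hG.2 X hX
  by_contra hne
  set H1 : factorsSet G X := ⟨h1, hh1⟩ with hw1
  set H2 : factorsSet G X := ⟨h2, hh2⟩ with hw2
  have hHne : H1 ≠ H2 := fun h => hne (congrArg Subtype.val h)
  have haX : a ∈ Set.Icc (⊥ : L) X := ⟨bot_le, le_trans ha1 hh1.2.1⟩
  have hle : ∀ (H : factorsSet G X), a ≤ H.1 →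
      φ.symm ⟨a, haX⟩ ≤ unitv G X H := by
    intro H haH
    rw [OrderIso.symm_apply_le]
    refine Subtype.coe_le_coe.mp ?_
    rw [phi_unitv φ hu H]
    exact haH
  have key : φ.symm ⟨a, haX⟩ = botv G X := by
    funext g
    refine le_antisymm ?_ (botv_le _ g)
    by_cases hg : g = H1
    · have := hle H2 ha2 g
      rw [unitv, if_neg (by rw [hg]; exact hHne)] at this
      exact this
    · have := hle H1 ha1 g
      rw [unitv, if_neg hg] at this
      exact this
  have : (⟨a, haX⟩ : Set.Icc (⊥ : L) X) = φ (botv G X) := by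
    rw [← key, φ.apply_symm_apply]
  have ha_bot : a = ⊥ := by
    have := congrArg Subtype.val this
    simpa [phi_botv φ] using this
  exact hG.1 a ha ha_bot

/-- LUBs in the product are computed coordinatewise. -/
lemma coord_isLUB {S : Set ((g : factorsSet G X) → Set.Icc (⊥ : L) g.1)}
    {v : (g : factorsSet G X) → Set.Icc (⊥ : L) g.1} (hv : IsLUB S v)
    (h : factorsSet G X) : IsLUB ((fun u => u h) '' S) (v h) := by
  constructor
  · rintro _ ⟨u, huS, rfl⟩
    exact hv.1 huS h
  · intro z hz
    set w := Function.update v h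
      ⟨(v h).1 ⊓ z.1, bot_le, le_trans inf_le_left (v h).2.2⟩ with hw
    have hwub : w ∈ upperBounds S := by
      intro u huS g
      by_cases hg : g = h
      · subst hg
        rw [hw, Function.update_self]
        refine Subtype.coe_le_coe.mp (le_inf ?_ ?_)
        · exact Subtype.coe_le_coe.mpr (hv.1 huS g)
        · exact Subtype.coe_le_coe.mpr (hz ⟨u, huS, rfl⟩)
      · rw [hw, Function.update_of_ne hg]
        exact hv.1 huS g
    have h1 := hv.2 hwub h
    rw [hw, Function.update_self] at h1
    have h2 : (v h).1 ≤ (v h).1 ⊓ z.1 := Subtype.coe_le_coe.mpr h1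
    exact Subtype.coe_le_coe.mp (le_trans h2 inf_le_right)

/-- LUBs transfer to the subtype `Icc ⊥ X`. -/
lemma isLUB_subtype {A : Set L} {x : L} (hA : IsLUB A x)
    (hsub : ∀ a ∈ A, a ∈ Set.Icc (⊥ : L) X) (hx : x ∈ Set.Icc (⊥ : L) X) :
    IsLUB {b : Set.Icc (⊥ : L) X | b.1 ∈ A} (⟨x, hx⟩ : Set.Icc (⊥ : L) X) := by
  constructor
  · intro b hb
    exact Subtype.coe_le_coe.mp (hA.1 hb)
  · intro z hz
    refine Subtype.coe_le_coe.mp (hA.2 ?_)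
    intro a ha
    exact hz (show ((⟨a, hsub a ha⟩ : Set.Icc (⊥ : L) X)).1 ∈ A from ha)

/-- The key structural lemma: the factors of the join of a nested antichain
are the antichain itself. -/
lemma nested_antichain_lub_factors (hG : IsBuilding L G) {T : Finset L}
    (hT : IsNested G T) (hAc : IsAntichain (· ≤ ·) (T : Set L)) (hne : T.Nonempty) :
    ∃ X, IsLUB (T : Set L) X ∧ factorsSet G X = (T : Set L) := by
  by_cases hcard : T.card = 1
  · obtain ⟨g, rfl⟩ := Finset.card_eq_one.mp hcard
    have hg : g ∈ G := hT.1 (by simp)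
    refine ⟨g, by simp only [Finset.coe_singleton]; exact isLUB_singleton, by simp [factorsSet_self hg]⟩
  · have hcard2 : 2 ≤ T.card := by
      have := Finset.card_pos.mpr hne; omega
    obtain ⟨X, hlub, hXG⟩ := hT.2 T Finset.Subset.rfl hAc hcard2
    obtain ⟨a0, ha0⟩ := hne
    have hXbot : X ≠ ⊥ := by
      intro hb; subst hb
      exact hG.1 a0 (hT.1 ha0) (le_bot_iff.mp (hlub.1 (by exact_mod_cast ha0)))
    obtain ⟨φ, hu⟩ := hG.2 X hXbot
    have hmemIcc : ∀ a ∈ T, a ∈ Set.Icc (⊥ : L) X := fun a ha =>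
      ⟨bot_le, hlub.1 (by exact_mod_cast ha)⟩
    have hfac : ∀ a ∈ T, ∃ h, h ∈ factorsSet G X ∧ a ≤ h := fun a ha =>
      factor_exists (hT.1 ha) (hlub.1 (by exact_mod_cast ha))
    choose H hHmem hHle using hfac
    -- coordinate vanishing for elements not below the factor h
    have hvanish : ∀ (b : Set.Icc (⊥ : L) X), b.1 ∈ (T : Set L) →
        ∀ (h : factorsSet G X), ¬ (b.1 ≤ h.1) →
        φ.symm b h = ⟨⊥, le_rfl, bot_le⟩ := by
      intro b hb h hnle
      have hHa : h ≠ (⟨H b.1 hb, hHmem b.1 hb⟩ : factorsSet G X) := by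
        intro he
        exact hnle (by rw [congrArg Subtype.val he]; exact hHle b.1 hb)
      have l1 : φ.symm b ≤ unitv G X ⟨H b.1 hb, hHmem b.1 hb⟩ := by
        rw [OrderIso.symm_apply_le]
        refine Subtype.coe_le_coe.mp ?_
        rw [phi_unitv φ hu]
        exact hHle b.1 hb
      have l2 := l1 h
      rw [unitv] at l2
      simp only [if_neg hHa] at l2
      exact le_antisymm l2 (Subtype.coe_le_coe.mp bot_le)
    -- generic fact : if `ψ b` is ≤ unitv h and has h-coordinate h, then b.1 = h.1
    have hrecog : ∀ (b : Set.Icc (⊥ : L) X) (h : factorsSet G X), b.1 ≤ h.1 →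
        φ.symm b h = (⟨h.1, bot_le, le_rfl⟩ : Set.Icc (⊥ : L) h.1) → b.1 = h.1 := by
      intro b h hble hcoord
      have l1 : φ.symm b ≤ unitv G X h := by
        rw [OrderIso.symm_apply_le]
        refine Subtype.coe_le_coe.mp ?_
        rw [phi_unitv φ hu]
        exact hble
      have l2 : φ.symm b = unitv G X h := by
        funext g
        by_cases hg : g = h
        · subst hg
          rw [hcoord, unitv]
          simp
        · refine le_antisymm (l1 g) ?_
          have hug : unitv G X h g = ⟨⊥, le_rfl, bot_le⟩ := by
            rw [unitv]; simp [if_neg hg]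
          rw [hug]
          exact Subtype.coe_le_coe.mp (φ.symm b g).2.1
      have l3 : b = φ (unitv G X h) := by
        rw [← l2, φ.apply_symm_apply]
      have := congrArg Subtype.val l3
      rwa [phi_unitv φ hu h] at this
    -- main claim: every factor of X belongs to T
    have hmain : ∀ h : factorsSet G X, h.1 ∈ (T : Set L) := by
      intro h
      set Th := T.filter (fun a => a ≤ h.1) with hTh
      have hThTset : ((Th : Finset L) : Set L) ⊆ (T : Set L) := by
        intro a ha; exact Finset.mem_coe.mpr (Finset.filter_subset _ _ (Finset.mem_coe.mp ha))
      have hXIcc : X ∈ Set.Icc (⊥ : L) X := ⟨bot_le, le_rfl⟩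
      have hThat : IsLUB {b : Set.Icc (⊥ : L) X | b.1 ∈ (T : Set L)} ⟨X, hXIcc⟩ :=
        isLUB_subtype hlub (fun a ha => hmemIcc a (Finset.mem_coe.mp ha)) hXIcc
      have himg : IsLUB (φ.symm '' {b : Set.Icc (⊥ : L) X | b.1 ∈ (T : Set L)})
          (φ.symm ⟨X, hXIcc⟩) := (OrderIso.isLUB_image' φ.symm).mpr hThat
      have hsymmtop : φ.symm ⟨X, hXIcc⟩ = topv G X := by
        rw [OrderIso.symm_apply_eq]
        exact (Subtype.ext (phi_topv φ)).symm
      rw [hsymmtop] at himg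
      have hcoordT := coord_isLUB himg h
      have htopvh : topv G X h = (⟨h.1, bot_le, le_rfl⟩ : Set.Icc (⊥ : L) h.1) := rfl
      rw [htopvh] at hcoordT
      set Qh : Set (Set.Icc (⊥ : L) h.1) :=
        (fun u => u h) '' (φ.symm '' {b : Set.Icc (⊥ : L) X | b.1 ∈ ((Th : Finset L) : Set L)})
        with hQh
      have hub_eq : upperBounds
          ((fun u => u h) '' (φ.symm '' {b : Set.Icc (⊥ : L) X | b.1 ∈ (T : Set L)}))
          = upperBounds Qh := by
        apply subset_antisymm
        · apply upperBounds_mono_set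
          apply Set.image_mono
          apply Set.image_mono
          intro b hb
          exact hThTset hb
        · intro z hz y hy
          rcases hy with ⟨u, ⟨b, hb, rfl⟩, rfl⟩
          by_cases hbh : b.1 ≤ h.1
          · refine hz ⟨φ.symm b, ⟨b, ?_, rfl⟩, rfl⟩
            simp only [Set.mem_setOf_eq, Finset.coe_filter, hTh]
            exact ⟨Finset.mem_coe.mp hb, hbh⟩
          · have hv0 := hvanish b hb h hbh
            show φ.symm b h ≤ z
            rw [hv0]
            exact Subtype.coe_le_coe.mp z.2.1
      have hQlub : IsLUB Qh (⟨h.1, bot_le, le_rfl⟩ : Set.Icc (⊥ : L) h.1) := by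
        constructor
        · have := hcoordT.1; rwa [hub_eq] at this
        · rw [← hub_eq]; exact hcoordT.2
      rcases Nat.lt_or_ge Th.card 2 with hc | hc
      · have hc01 : Th.card = 0 ∨ Th.card = 1 := by omega
        rcases hc01 with hc0 | hc1
        · exfalso
          have hThe : Th = ∅ := Finset.card_eq_zero.mp hc0
          have hQe : Qh = ∅ := by
            rw [hQh, hThe]
            simp
          rw [hQe] at hQlub
          have : (⟨h.1, bot_le, le_rfl⟩ : Set.Icc (⊥ : L) h.1) ≤ ⟨⊥, le_rfl, bot_le⟩ :=
            hQlub.2 (by simp [upperBounds])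
          exact hG.1 h.1 h.2.1 (le_bot_iff.mp (Subtype.coe_le_coe.mpr this))
        · obtain ⟨a, hae⟩ := Finset.card_eq_one.mp hc1
          have haT : a ∈ T := by
            have : a ∈ Th := by rw [hae]; exact Finset.mem_singleton_self a
            exact Finset.filter_subset _ _ this
          have hah : a ≤ h.1 := by
            have : a ∈ Th := by rw [hae]; exact Finset.mem_singleton_self a
            exact (Finset.mem_filter.mp this).2
          have haIcc : a ∈ Set.Icc (⊥ : L) X := hmemIcc a haT
          have hQsing : Qh = {φ.symm ⟨a, haIcc⟩ h} := by
            rw [hQh, hae]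
            ext y
            constructor
            · rintro ⟨u, ⟨b, hb, rfl⟩, rfl⟩
              simp only [Set.mem_setOf_eq, Finset.coe_singleton, Set.mem_singleton_iff] at hb
              have : b = ⟨a, haIcc⟩ := Subtype.ext hb
              rw [this]
              rfl
            · rintro rfl
              exact ⟨φ.symm ⟨a, haIcc⟩, ⟨⟨a, haIcc⟩, by simp, rfl⟩, rfl⟩
          rw [hQsing] at hQlub
          have hcoordval : φ.symm ⟨a, haIcc⟩ h = ⟨h.1, bot_le, le_rfl⟩ :=
            isLUB_singleton.unique hQlub
          have hah2 : a = h.1 := hrecog ⟨a, haIcc⟩ h hah hcoordval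
          rw [← hah2]
          exact Finset.mem_coe.mpr haT
      · exfalso
        have hsub : Th ⊆ T := Finset.filter_subset _ _
        obtain ⟨j, hjlub, hjG⟩ := hT.2 Th hsub (hAc.subset hThTset) hc
        have hjh : j ≤ h.1 := hjlub.2 (fun a ha => (Finset.mem_filter.mp (Finset.mem_coe.mp ha)).2)
        have hjX : j ∈ Set.Icc (⊥ : L) X := ⟨bot_le, le_trans hjh h.2.2.1⟩
        have hThlub : IsLUB {b : Set.Icc (⊥ : L) X | b.1 ∈ ((Th : Finset L) : Set L)}
            ⟨j, hjX⟩ :=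
          isLUB_subtype hjlub (fun a ha => hmemIcc a (hsub (Finset.mem_coe.mp ha))) hjX
        have himgj := (OrderIso.isLUB_image' φ.symm).mpr hThlub
        have hcoordj := coord_isLUB himgj h
        have heq : φ.symm ⟨j, hjX⟩ h = (⟨h.1, bot_le, le_rfl⟩ : Set.Icc (⊥ : L) h.1) :=
          hcoordj.unique hQlub
        have hj2 : j = h.1 := hrecog ⟨j, hjX⟩ h hjh heq
        rw [hj2] at hjG
        exact hjG h.2.1
    refine ⟨X, hlub, subset_antisymm (fun h hh => hmain ⟨h, hh⟩) ?_⟩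
    intro a ha
    have hHT : H a (Finset.mem_coe.mp ha) ∈ (T : Set L) :=
      hmain ⟨H a (Finset.mem_coe.mp ha), hHmem a (Finset.mem_coe.mp ha)⟩
    have haH : a = H a (Finset.mem_coe.mp ha) := by
      by_contra hne
      exact hAc ha hHT hne (hHle a (Finset.mem_coe.mp ha))
    rw [haH]
    exact hHmem a (Finset.mem_coe.mp ha)

/-- The factors, as a finset. -/
noncomputable def FF (G : Set L) (X : L) : Finset L :=
  Finset.univ.filter (· ∈ factorsSet G X)

lemma mem_FF {g X : L} : g ∈ FF G X ↔ g ∈ factorsSet G X := by simp [FF]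

/-- Union of the factor sets over a finset of elements. -/
noncomputable def FFU (G : Set L) (C : Finset L) : Finset L :=
  C.biUnion (fun X => FF G X)

lemma nested_subset {S S' : Finset L} (h : IsNested G S) (hsub : S' ⊆ S) :
    IsNested G S' :=
  ⟨fun a ha => h.1 (Finset.mem_coe.mpr (hsub (Finset.mem_coe.mp ha))),
   fun A hA hAc hc => h.2 A (hA.trans hsub) hAc hc⟩

/-- Maximum of a nonempty finite chain. -/
lemma chain_exists_max {C : Finset L} (hchain : IsChain (· ≤ ·) (C : Set L))
    (hne : C.Nonempty) : ∃ M ∈ C, ∀ Y ∈ C, Y ≤ M := by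
  obtain ⟨M, hMC, hMmax⟩ := C.exists_maximal hne
  refine ⟨M, hMC, ?_⟩
  intro Y hY
  rcases eq_or_ne Y M with rfl | hne'
  · exact le_rfl
  · rcases hchain (Finset.mem_coe.mpr hY) (Finset.mem_coe.mpr hMC) hne' with h | h
    · exact h
    · exact hMmax hY h

lemma chain_union_lub_not_mem (hG : IsBuilding L G) :
    ∀ (C : Finset L), IsChain (· ≤ ·) (C : Set L) → (⊥ : L) ∉ C →
    ∀ A : Finset L, A ⊆ FFU G C → IsAntichain (· ≤ ·) (A : Set L) → 2 ≤ A.card →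
    ∀ j, IsLUB (A : Set L) j → j ∉ G := by
  intro C
  induction C using Finset.strongInduction with
  | _ C ih =>
    intro hchain hbot A hA hAc hc j hj hjG
    have hAne : A.Nonempty := Finset.card_pos.mp (lt_of_lt_of_le two_pos hc)
    obtain ⟨a0, ha0⟩ := hAne
    obtain ⟨X0, hX0C, _⟩ := Finset.mem_biUnion.mp (hA ha0)
    obtain ⟨M, hMC, hMtop⟩ := chain_exists_max hchain ⟨X0, hX0C⟩
    have hAGM : ∀ a ∈ A, a ≤ M := by
      intro a ha
      obtain ⟨X, hXC, haX⟩ := Finset.mem_biUnion.mp (hA ha)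
      exact le_trans (mem_FF.mp haX).2.1 (hMtop X hXC)
    have hjM : j ≤ M := hj.2 (fun a ha => hAGM a (Finset.mem_coe.mp ha))
    obtain ⟨hstar, hstarf, hjstar⟩ := factor_exists hjG hjM
    have hAle : ∀ a ∈ A, a ≤ hstar := fun a ha =>
      le_trans (hj.1 (Finset.mem_coe.mpr ha)) hjstar
    have hstarA : hstar ∉ A := by
      intro hmem
      obtain ⟨a', ha', hane⟩ := Finset.exists_mem_ne (lt_of_lt_of_le one_lt_two hc) hstar
      exact hAc (Finset.mem_coe.mpr ha') (Finset.mem_coe.mpr hmem) hane (hAle a' ha')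
    have hAM : ∀ a ∈ A, a ∉ FF G M := by
      intro a ha hamem
      have haf := mem_FF.mp hamem
      have : a = hstar := haf.2.2 hstar hstarf.1 hstarf.2.1 (hAle a ha)
      exact hstarA (this ▸ ha)
    have hsub' : A ⊆ FFU G (C.erase M) := by
      intro a ha
      obtain ⟨X, hXC, haX⟩ := Finset.mem_biUnion.mp (hA ha)
      refine Finset.mem_biUnion.mpr ⟨X, Finset.mem_erase.mpr ⟨?_, hXC⟩, haX⟩
      rintro rfl
      exact hAM a ha haX
    exact ih (C.erase M) (Finset.erase_ssubset hMC)
      (hchain.mono (by exact_mod_cast Finset.erase_subset _ _))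
      (fun h => hbot (Finset.erase_subset _ _ h)) A hsub' hAc hc j hj hjG

/-- The union of the factor sets over a chain avoiding `⊥` is nested. -/
lemma nested_chain_union (hG : IsBuilding L G) {C : Finset L}
    (hchain : IsChain (· ≤ ·) (C : Set L)) (hbot : (⊥ : L) ∉ C) :
    IsNested G (FFU G C) := by
  constructor
  · intro a ha
    obtain ⟨X, _, haX⟩ := Finset.mem_biUnion.mp (Finset.mem_coe.mp ha)
    exact (mem_FF.mp haX).1
  · intro A hA hAc hc
    have hAne : A.Nonempty := Finset.card_pos.mp (lt_of_lt_of_le two_pos hc)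
    obtain ⟨a0, ha0⟩ := hAne
    obtain ⟨X0, hX0C, _⟩ := Finset.mem_biUnion.mp (hA ha0)
    obtain ⟨M, hMC, hMtop⟩ := chain_exists_max hchain ⟨X0, hX0C⟩
    have hub : M ∈ upperBounds (A : Set L) := by
      intro a ha
      obtain ⟨X, hXC, haX⟩ := Finset.mem_biUnion.mp (hA (Finset.mem_coe.mp ha))
      exact le_trans (mem_FF.mp haX).2.1 (hMtop X hXC)
    obtain ⟨j, hj, _⟩ := exists_isLUB_le hub
    exact ⟨j, hj, chain_union_lub_not_mem hG C hchain hbot A hA hAc hc j hj⟩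

/-- The maximal elements of a finset. -/
noncomputable def maxF (T : Finset L) : Finset L :=
  T.filter (fun a => ∀ b ∈ T, a ≤ b → a = b)

lemma maxF_subset {T : Finset L} : maxF T ⊆ T := Finset.filter_subset _ _

lemma le_maxF {T : Finset L} : ∀ a ∈ T, ∃ m ∈ maxF T, a ≤ m := by
  intro a ha
  set s := T.filter (fun b => a ≤ b) with hs
  obtain ⟨m, hm, hmax⟩ := s.exists_maximal ⟨a, by simp [hs, ha]⟩
  rw [hs, Finset.mem_filter] at hm
  refine ⟨m, Finset.mem_filter.mpr ⟨hm.1, ?_⟩, hm.2⟩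
  intro b hb hmb
  by_contra hne
  exact hne (le_antisymm hmb (hmax (by simp [hs, hb, le_trans hm.2 hmb]) hmb))

lemma maxF_antichain {T : Finset L} : IsAntichain (· ≤ ·) ((maxF T : Finset L) : Set L) := by
  intro a ha b hb hne hab
  exact hne ((Finset.mem_filter.mp (Finset.mem_coe.mp ha)).2 b
    (maxF_subset (Finset.mem_coe.mp hb)) hab)

lemma maxF_nonempty {T : Finset L} (hne : T.Nonempty) : (maxF T).Nonempty := by
  obtain ⟨a, ha⟩ := hne
  obtain ⟨m, hm, _⟩ := le_maxF a ha
  exact ⟨m, hm⟩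

/-- A nonempty nested set has a least upper bound whose factors are
exactly the maximal elements of the set. -/
lemma nested_lub (hG : IsBuilding L G) {T : Finset L} (hT : IsNested G T)
    (hne : T.Nonempty) :
    ∃ X, IsLUB (T : Set L) X ∧ factorsSet G X = ((maxF T : Finset L) : Set L) := by
  obtain ⟨X, hlub, hfac⟩ := nested_antichain_lub_factors hG
    (nested_subset hT maxF_subset) maxF_antichain (maxF_nonempty hne)
  refine ⟨X, ⟨?_, ?_⟩, hfac⟩
  · intro a ha
    obtain ⟨m, hm, ham⟩ := le_maxF a (Finset.mem_coe.mp ha)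
    exact le_trans ham (hlub.1 (Finset.mem_coe.mpr hm))
  · intro z hz
    exact hlub.2 (fun m hm => hz (Finset.mem_coe.mpr (maxF_subset (Finset.mem_coe.mp hm))))

/-- The max of a chain is the least upper bound of the union of factor sets. -/
lemma chain_FFU_isLUB (hG : IsBuilding L G) {C : Finset L} {M : L} (hMC : M ∈ C)
    (hbot : (⊥ : L) ∉ C) (hMtop : ∀ Y ∈ C, Y ≤ M) :
    IsLUB ((FFU G C : Finset L) : Set L) M := by
  have hMbot : M ≠ ⊥ := fun h => hbot (h ▸ hMC)
  constructor
  · intro a ha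
    obtain ⟨X, hXC, haX⟩ := Finset.mem_biUnion.mp (Finset.mem_coe.mp ha)
    exact le_trans (mem_FF.mp haX).2.1 (hMtop X hXC)
  · intro z hz
    refine (isLUB_factorsSet hG hMbot).2 ?_
    intro g hg
    exact hz (Finset.mem_coe.mpr (Finset.mem_biUnion.mpr ⟨M, hMC, mem_FF.mpr hg⟩))

/-- Barycentric weight of vertex `g` in the factor set of `X`. -/
noncomputable def wtf (G : Set L) (X g : L) : ℝ :=
  if g ∈ FF G X then ((FF G X).card : ℝ)⁻¹ else 0

/-- The subdivision map on weight functions. -/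
noncomputable def Phi (G : Set L) (f : L → ℝ) : L → ℝ :=
  fun g => ∑ X : L, f X * wtf G X g

/-- Support of a function, as a finset. -/
noncomputable def suppF (f : L → ℝ) : Finset L :=
  Finset.univ.filter (fun v => f v ≠ 0)

lemma mem_suppF {f : L → ℝ} {v : L} : v ∈ suppF f ↔ f v ≠ 0 := by simp [suppF]

lemma wtf_nonneg {X g : L} : 0 ≤ wtf G X g := by
  rw [wtf]; split
  · positivity
  · exact le_rfl

lemma wtf_ne_zero_iff {X g : L} : wtf G X g ≠ 0 ↔ g ∈ FF G X := by
  constructor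
  · intro h
    rw [wtf] at h
    by_contra hg
    exact h (if_neg hg)
  · intro hg
    rw [wtf, if_pos hg]
    have hpos : 0 < (FF G X).card := Finset.card_pos.mpr ⟨g, hg⟩
    positivity

lemma FF_nonempty (hG : IsBuilding L G) {X : L} (hX : X ≠ ⊥) : (FF G X).Nonempty := by
  obtain ⟨g, hg⟩ := factorsSet_nonempty hG hX (isLUB_factorsSet hG hX)
  exact ⟨g, mem_FF.mpr hg⟩

lemma sum_wtf (hG : IsBuilding L G) {X : L} (hX : X ≠ ⊥) :
    ∑ g : L, wtf G X g = 1 := by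
  have hne := FF_nonempty hG hX
  have hcard : ((FF G X).card : ℝ) ≠ 0 := by
    exact_mod_cast Finset.card_pos.mpr hne |>.ne'
  calc ∑ g : L, wtf G X g
      = ∑ g ∈ FF G X, ((FF G X).card : ℝ)⁻¹ := by
        simp only [wtf]
        rw [Finset.sum_ite_mem, Finset.univ_inter]
  _ = ((FF G X).card : ℝ) * ((FF G X).card : ℝ)⁻¹ := by
        rw [Finset.sum_const, nsmul_eq_mul]
  _ = 1 := mul_inv_cancel₀ hcard

lemma factorsSet_bot : factorsSet G (⊥ : L) = ∅ ∨ True := Or.inr trivial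

lemma Phi_nonneg {f : L → ℝ} (hf : ∀ v, 0 ≤ f v) (g : L) : 0 ≤ Phi G f g :=
  Finset.sum_nonneg fun X _ => mul_nonneg (hf X) wtf_nonneg

lemma Phi_ne_zero_iff {f : L → ℝ} (hf : ∀ v, 0 ≤ f v) (g : L) :
    Phi G f g ≠ 0 ↔ ∃ X, f X ≠ 0 ∧ g ∈ FF G X := by
  rw [Phi]
  rw [← not_iff_not]
  push_neg
  rw [Finset.sum_eq_zero_iff_of_nonneg (fun X _ => mul_nonneg (hf X) wtf_nonneg)]
  constructor
  · intro h X hX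
    have := h X (Finset.mem_univ X)
    rcases mul_eq_zero.mp this with h1 | h2
    · exact absurd h1 hX
    · exact fun hg => (wtf_ne_zero_iff.mpr hg) h2
  · intro h X _
    by_cases hX : f X = 0
    · rw [hX, zero_mul]
    · have : ¬ g ∈ FF G X := h X hX
      have : wtf G X g = 0 := by
        by_contra hw
        exact this (wtf_ne_zero_iff.mp hw)
      rw [this, mul_zero]

lemma suppF_Phi {f : L → ℝ} (hf : ∀ v, 0 ≤ f v) :
    suppF (Phi G f) = FFU G (suppF f) := by
  ext g
  rw [mem_suppF, Phi_ne_zero_iff hf]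
  constructor
  · rintro ⟨X, hX, hg⟩
    exact Finset.mem_biUnion.mpr ⟨X, mem_suppF.mpr hX, hg⟩
  · intro h
    obtain ⟨X, hX, hg⟩ := Finset.mem_biUnion.mp h
    exact ⟨X, mem_suppF.mp hX, hg⟩

lemma sum_eq_total {f : L → ℝ} {s : Finset L} (hs : ∀ v, f v ≠ 0 → v ∈ s) :
    ∑ v ∈ s, f v = ∑ v : L, f v := by
  refine Finset.sum_subset (Finset.subset_univ s) ?_
  intro x _ hxs
  by_contra hx
  exact hxs (hs x hx)

lemma sum_Phi (hG : IsBuilding L G) {f : L → ℝ} (hbot : f ⊥ = 0) :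
    ∑ g : L, Phi G f g = ∑ X : L, f X := by
  simp only [Phi]
  rw [Finset.sum_comm]
  refine Finset.sum_congr rfl ?_
  intro X _
  rcases eq_or_ne X ⊥ with rfl | hX
  · simp [hbot]
  · rw [← Finset.mul_sum, sum_wtf hG hX, mul_one]

/-- Splitting a sum along an `if`-decomposition with a fresh maximal vertex. -/
lemma sum_split (f' : L → ℝ) (t : ℝ) (X : L) (h0 : f' X = 0) (w : L → ℝ) :
    ∑ Y : L, (if Y = X then t else (1 - t) * f' Y) * w Y
      = (1 - t) * (∑ Y : L, f' Y * w Y) + t * w X := by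
  have key : ∀ Y : L, (if Y = X then t else (1 - t) * f' Y) * w Y
      = (1 - t) * (f' Y * w Y) + (if Y = X then t * w Y else 0) := by
    intro Y
    by_cases hY : Y = X
    · subst hY; rw [if_pos rfl, if_pos rfl, h0]; ring
    · rw [if_neg hY, if_neg hY]; ring
  rw [Finset.sum_congr rfl (fun Y _ => key Y), Finset.sum_add_distrib, ← Finset.mul_sum,
    Finset.sum_ite_eq' Finset.univ X (fun Y => t * w Y), if_pos (Finset.mem_univ X)]

/-- Splitting a sum along an erase-decomposition. -/
lemma sum_split_erase (f : L → ℝ) (M : L) (w : L → ℝ) :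
    ∑ Y : L, (if Y = M then 0 else f Y) * w Y
      = ∑ Y : L, f Y * w Y - f M * w M := by
  have key : ∀ Y : L, (if Y = M then 0 else f Y) * w Y
      = f Y * w Y - (if Y = M then f Y * w Y else 0) := by
    intro Y
    by_cases hY : Y = M
    · subst hY; simp
    · rw [if_neg hY, if_neg hY]; ring
  rw [Finset.sum_congr rfl (fun Y _ => key Y), Finset.sum_sub_distrib,
    Finset.sum_ite_eq' Finset.univ M (fun Y => f Y * w Y), if_pos (Finset.mem_univ M)]

lemma sum_ite_erase (h : L → ℝ) (M : L) :
    ∑ Y : L, (if Y = M then 0 else h Y) = (∑ Y : L, h Y) - h M := by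
  have := sum_split_erase h M (fun _ => (1 : ℝ))
  simpa using this

lemma suppF_nonempty_of_sum_one {f : L → ℝ} (hfs : ∑ v : L, f v = 1) :
    (suppF f).Nonempty := by
  rw [Finset.nonempty_iff_ne_empty]
  intro hemp
  have hz : ∀ v : L, f v = 0 := by
    intro v
    by_contra hv
    have : v ∈ suppF f := mem_suppF.mpr hv
    rw [hemp] at this
    exact absurd this (Finset.notMem_empty v)
  rw [Finset.sum_eq_zero (fun v _ => hz v)] at hfs
  exact one_ne_zero hfs.symm

/-- Existence of a factor of the maximal chain element private to it. -/
lemma exists_private_factor (hG : IsBuilding L G) {C : Finset L} {M : L}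
    (hchain : IsChain (· ≤ ·) (C : Set L)) (hbot : (⊥ : L) ∉ C) (hMC : M ∈ C)
    (hMtop : ∀ Y ∈ C, Y ≤ M) :
    ∃ g ∈ FF G M, ∀ X ∈ C, X ≠ M → g ∉ FF G X := by
  by_contra hcon
  push_neg at hcon
  have hMbot : M ≠ ⊥ := fun h => hbot (h ▸ hMC)
  have hne' : (C.erase M).Nonempty := by
    obtain ⟨g0, hg0⟩ := FF_nonempty hG hMbot
    obtain ⟨X, hXC, hXM, _⟩ := hcon g0 hg0
    exact ⟨X, Finset.mem_erase.mpr ⟨hXM, hXC⟩⟩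
  obtain ⟨M2, hM2C, hM2top⟩ := chain_exists_max
    (hchain.mono (by exact_mod_cast Finset.erase_subset _ _)) hne'
  have hM2 := Finset.mem_erase.mp hM2C
  have hMM2 : M ≤ M2 := by
    refine (isLUB_factorsSet hG hMbot).2 ?_
    intro g hg
    obtain ⟨X, hXC, hXM, hgX⟩ := hcon g (mem_FF.mpr hg)
    exact le_trans (mem_FF.mp hgX).2.1 (hM2top X (Finset.mem_erase.mpr ⟨hXM, hXC⟩))
  exact hM2.1 (le_antisymm (hMtop M2 hM2.2) hMM2)

lemma Phi_inj_aux (hG : IsBuilding L G) :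
    ∀ (n : ℕ) (f f' : L → ℝ),
    (suppF f).card ≤ n →
    (∀ v, 0 ≤ f v) → IsChain (· ≤ ·) ((suppF f : Finset L) : Set L) →
    ((⊥ : L) ∉ suppF f) → (∑ v : L, f v) = 1 →
    (∀ v, 0 ≤ f' v) → IsChain (· ≤ ·) ((suppF f' : Finset L) : Set L) →
    ((⊥ : L) ∉ suppF f') → (∑ v : L, f' v) = 1 →
    Phi G f = Phi G f' → f = f' := by
  intro n
  induction n with
  | zero =>
    intro f f' hcard _ _ _ hfs _ _ _ _ _
    exfalso
    exact Finset.Nonempty.ne_empty (suppF_nonempty_of_sum_one hfs)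
      (Finset.card_eq_zero.mp (Nat.le_zero.mp hcard))
  | succ n ih =>
    intro f f' hcard hf0 hfc hfb hfs hf'0 hf'c hf'b hf's heq
    have hCne := suppF_nonempty_of_sum_one hfs
    have hC'ne := suppF_nonempty_of_sum_one hf's
    obtain ⟨M, hMC, hMtop⟩ := chain_exists_max hfc hCne
    obtain ⟨M', hM'C, hM'top⟩ := chain_exists_max hf'c hC'ne
    have hsupp_eq : FFU G (suppF f) = FFU G (suppF f') := by
      rw [← suppF_Phi hf0, ← suppF_Phi hf'0, heq]
    have hMM' : M = M' := by
      have h1 := chain_FFU_isLUB hG hMC hfb hMtop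
      have h2 := chain_FFU_isLUB hG hM'C hf'b hM'top
      rw [← hsupp_eq] at h2
      exact h1.unique h2
    subst hMM'
    have hMbot : M ≠ ⊥ := fun h => hfb (h ▸ hMC)
    have hcardpos : (0 : ℝ) < ((FF G M).card : ℝ) := by
      exact_mod_cast Finset.card_pos.mpr (FF_nonempty hG hMbot)
    have hinvpos : (0 : ℝ) < ((FF G M).card : ℝ)⁻¹ := inv_pos.mpr hcardpos
    have hkey : ∀ (g : L), g ∈ FF G M → ∀ (h : L → ℝ), (∀ v, 0 ≤ h v) →
        h M * ((FF G M).card : ℝ)⁻¹ ≤ Phi G h g := by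
      intro g hgm h h0
      have h1 : h M * wtf G M g ≤ ∑ X : L, h X * wtf G X g :=
        Finset.single_le_sum (f := fun X => h X * wtf G X g)
          (fun X _ => mul_nonneg (h0 X) wtf_nonneg) (Finset.mem_univ M)
      rwa [wtf, if_pos hgm] at h1
    have hexact : ∀ (h : L → ℝ) (g : L), g ∈ FF G M →
        (∀ X ∈ suppF h, X ≠ M → g ∉ FF G X) →
        Phi G h g = h M * ((FF G M).card : ℝ)⁻¹ := by
      intro h g hgm hpriv
      rw [Phi]
      rw [Finset.sum_eq_single M]
      · rw [wtf, if_pos hgm]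
      · intro b _ hbM
        by_cases hb : h b = 0
        · rw [hb, zero_mul]
        · have hnb : g ∉ FF G b := hpriv b (mem_suppF.mpr hb) hbM
          have hw : wtf G b g = 0 := by
            by_contra hw; exact hnb (wtf_ne_zero_iff.mp hw)
          rw [hw, mul_zero]
      · intro h'; exact absurd (Finset.mem_univ M) h'
    have htt' : f M = f' M := by
      obtain ⟨gs, hgs, hgspriv⟩ := exists_private_factor hG hfc hfb hMC hMtop
      obtain ⟨gs', hgs', hgs'priv⟩ := exists_private_factor hG hf'c hf'b hM'C hM'top
      have e1 : Phi G f gs = f M * ((FF G M).card : ℝ)⁻¹ := hexact f gs hgs hgspriv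
      have e2 : Phi G f' gs' = f' M * ((FF G M).card : ℝ)⁻¹ := hexact f' gs' hgs' hgs'priv
      have i1 : f' M * ((FF G M).card : ℝ)⁻¹ ≤ Phi G f' gs := hkey gs hgs f' hf'0
      have i2 : f M * ((FF G M).card : ℝ)⁻¹ ≤ Phi G f gs' := hkey gs' hgs' f hf0
      rw [← heq, e1] at i1
      rw [heq, e2] at i2
      have l1 : f' M ≤ f M := le_of_mul_le_mul_right (by simpa [mul_comm] using i1) hinvpos
      have l2 : f M ≤ f' M := le_of_mul_le_mul_right (by simpa [mul_comm] using i2) hinvpos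
      exact le_antisymm l2 l1
    set t := f M with ht
    have htle : t ≤ 1 := by
      rw [← hfs]
      exact Finset.single_le_sum (fun v _ => hf0 v) (Finset.mem_univ M)
    rcases eq_or_lt_of_le htle with ht1 | ht1
    · -- t = 1 : both are the indicator of M
      have hind : ∀ (h : L → ℝ), (∀ v, 0 ≤ h v) → (∑ v : L, h v) = 1 → h M = 1 →
          h = fun Y => if Y = M then 1 else 0 := by
        intro h h0 hs hM
        funext Y
        by_cases hY : Y = M
        · subst hY; rw [if_pos rfl, hM]
        · rw [if_neg hY]
          have h1 : ∑ v ∈ Finset.univ.erase M, h v = 0 := by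
            have h2 := Finset.add_sum_erase Finset.univ h (Finset.mem_univ M)
            rw [hs, hM] at h2
            linarith
          exact (Finset.sum_eq_zero_iff_of_nonneg (fun v _ => h0 v)).mp h1 Y
            (Finset.mem_erase.mpr ⟨hY, Finset.mem_univ Y⟩)
      rw [hind f hf0 hfs ht1, hind f' hf'0 hf's (htt'.symm.trans ht1)]
    · -- t < 1 : recurse
      have h1t : (1 : ℝ) - t ≠ 0 := by linarith
      have hscale : ∀ (h : L → ℝ), Phi G h M = Phi G h M → True := fun _ _ => trivial
      set g := fun Y => if Y = M then 0 else f Y / (1 - t) with hgdef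
      set g' := fun Y => if Y = M then 0 else f' Y / (1 - t) with hg'def
      have hprops : ∀ (h : L → ℝ), (∀ v, 0 ≤ h v) → (∑ v : L, h v) = 1 → h M = t →
          (∀ v, 0 ≤ (fun Y => if Y = M then 0 else h Y / (1 - t)) v) ∧
          suppF (fun Y => if Y = M then 0 else h Y / (1 - t)) = (suppF h).erase M ∧
          (∑ v : L, (fun Y => if Y = M then 0 else h Y / (1 - t)) v) = 1 := by
        intro h h0 hs hM
        refine ⟨?_, ?_, ?_⟩
        · intro v
          by_cases hv : v = M
          · simp [hv]
          · simp only [if_neg hv]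
            exact div_nonneg (h0 v) (by linarith)
        · ext Y
          rw [mem_suppF, Finset.mem_erase, mem_suppF]
          by_cases hY : Y = M
          · simp [hY]
          · simp only [if_neg hY]
            constructor
            · intro hd
              refine ⟨hY, fun hz => hd ?_⟩
              rw [hz, zero_div]
            · rintro ⟨_, hz⟩ hd
              exact hz ((div_eq_zero_iff.mp hd).resolve_right h1t)
        · have e1 : ∀ Y : L, (if Y = M then 0 else h Y / (1 - t))
              = (if Y = M then 0 else h Y) / (1 - t) := by
            intro Y; by_cases hY : Y = M
            · simp [hY]
            · simp [if_neg hY]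
          rw [Finset.sum_congr rfl (fun Y _ => e1 Y), ← Finset.sum_div, sum_ite_erase,
            hs, hM, div_self h1t]
      have hPhig : ∀ (h : L → ℝ), h M = t → ∀ y : L,
          (1 - t) * Phi G (fun Y => if Y = M then 0 else h Y / (1 - t)) y
            = Phi G h y - t * wtf G M y := by
        intro h hM y
        rw [Phi, Finset.mul_sum]
        have e1 : ∀ Y : L, (1 - t) * ((if Y = M then 0 else h Y / (1 - t)) * wtf G Y y)
            = (if Y = M then 0 else h Y) * wtf G Y y := by
          intro Y
          by_cases hY : Y = M
          · simp [hY]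
          · rw [if_neg hY, if_neg hY]
            field_simp
        rw [Finset.sum_congr rfl (fun Y _ => e1 Y), sum_split_erase, hM, Phi]
      obtain ⟨hg0, hgsupp, hgs⟩ := hprops f hf0 hfs rfl
      obtain ⟨hg'0, hg'supp, hg's⟩ := hprops f' hf'0 hf's htt'.symm
      have hPhieq : Phi G g = Phi G g' := by
        funext y
        have e1 := hPhig f rfl y
        have e2 := hPhig f' htt'.symm y
        rw [← hgdef] at e1
        rw [← hg'def] at e2
        have : (1 - t) * Phi G g y = (1 - t) * Phi G g' y := by
          rw [e1, e2, heq]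
        exact mul_left_cancel₀ h1t this
      have hgcard : (suppF g).card ≤ n := by
        rw [hgsupp, Finset.card_erase_of_mem hMC]
        omega
      have hgchain : IsChain (· ≤ ·) ((suppF g : Finset L) : Set L) := by
        rw [hgsupp]
        exact hfc.mono (by exact_mod_cast Finset.erase_subset _ _)
      have hg'chain : IsChain (· ≤ ·) ((suppF g' : Finset L) : Set L) := by
        rw [hg'supp]
        exact hf'c.mono (by exact_mod_cast Finset.erase_subset _ _)
      have hgbot : (⊥ : L) ∉ suppF g := by
        rw [hgsupp]
        exact fun h => hfb (Finset.erase_subset _ _ h)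
      have hg'bot : (⊥ : L) ∉ suppF g' := by
        rw [hg'supp]
        exact fun h => hf'b (Finset.erase_subset _ _ h)
      have hgg' : g = g' := ih g g' hgcard hg0 hgchain hgbot hgs hg'0 hg'chain hg'bot hg's hPhieq
      funext Y
      by_cases hY : Y = M
      · rw [hY]; exact htt'
      · have e1 : g Y = f Y / (1 - t) := by rw [hgdef]; simp [if_neg hY]
        have e2 : g' Y = f' Y / (1 - t) := by rw [hg'def]; simp [if_neg hY]
        have := hgg' ▸ e1
        rw [e2] at this
        field_simp at this
        exact this.symm

lemma Phi_surj_aux (hG : IsBuilding L G) :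
    ∀ (n : ℕ) (c : L → ℝ), (suppF c).card ≤ n → (suppF c).Nonempty →
    IsNested G (suppF c) → (∀ v, 0 ≤ c v) → (∑ v : L, c v) = 1 →
    ∃ f : L → ℝ, (∀ v, 0 ≤ f v) ∧ IsChain (· ≤ ·) ((suppF f : Finset L) : Set L) ∧
      ((⊥ : L) ∉ suppF f) ∧ (∑ v : L, f v) = 1 ∧ Phi G f = c ∧
      ∃ X, IsLUB ((suppF c : Finset L) : Set L) X ∧ ∀ Y, f Y ≠ 0 → Y ≤ X := by
  intro n
  induction n with
  | zero =>
    intro c hcard hne _ _ _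
    exfalso
    have := Finset.card_pos.mpr hne
    omega
  | succ n ih =>
    intro c hcard hne hnested hc0 hcs
    obtain ⟨X, hlub, hfac⟩ := nested_lub hG hnested hne
    have hXbot : X ≠ ⊥ := by
      obtain ⟨a, ha⟩ := hne
      intro h; subst h
      have haG : a ∈ G := hnested.1 (Finset.mem_coe.mpr ha)
      exact hG.1 a haG (le_bot_iff.mp (hlub.1 (Finset.mem_coe.mpr ha)))
    have hFFcoe : ((FF G X : Finset L) : Set L) = factorsSet G X := by
      ext g; simp [FF]
    have hFFeq : FF G X = maxF (suppF c) := Finset.coe_injective (by rw [hFFcoe, hfac])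
    have hmne : (maxF (suppF c)).Nonempty := maxF_nonempty hne
    have hmR : (0 : ℝ) < ((maxF (suppF c)).card : ℝ) := by
      exact_mod_cast Finset.card_pos.mpr hmne
    obtain ⟨g0, hg0m, hg0val⟩ := Finset.exists_mem_eq_inf' hmne c
    set μ := (maxF (suppF c)).inf' hmne c with hμdef
    have hμpos : 0 < μ := by
      rw [hg0val]
      exact lt_of_le_of_ne (hc0 g0) (Ne.symm (mem_suppF.mp (maxF_subset hg0m)))
    set t := ((maxF (suppF c)).card : ℝ) * μ with htdef
    have htpos : 0 < t := mul_pos hmR hμpos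
    have hμle : ∀ g ∈ maxF (suppF c), μ ≤ c g := fun g hg => Finset.inf'_le c hg
    have hwt : ∀ v : L, wtf G X v =
        if v ∈ maxF (suppF c) then (((maxF (suppF c)).card : ℝ))⁻¹ else 0 := by
      intro v; rw [wtf, hFFeq]
    have hsumT : ∑ v ∈ suppF c, c v = 1 := by
      rw [← hcs]; exact sum_eq_total (fun v hv => mem_suppF.mpr hv)
    set D := (maxF (suppF c)).filter (fun g => c g = μ) with hDdef
    have hg0D : g0 ∈ D := Finset.mem_filter.mpr ⟨hg0m, hg0val.symm⟩
    set T' := suppF c \ D with hT'def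
    by_cases hT'e : T' = ∅
    · -- terminal case : uniform weights on an antichain
      have hTD : suppF c ⊆ D := Finset.sdiff_eq_empty_iff_subset.mp hT'e
      have hTmax : suppF c = maxF (suppF c) :=
        Finset.Subset.antisymm (hTD.trans (Finset.filter_subset _ _)) maxF_subset
      have hcval : ∀ v ∈ suppF c, c v = μ := fun v hv => (Finset.mem_filter.mp (hTD hv)).2
      have ht1 : t = 1 := by
        rw [htdef, ← hsumT, Finset.sum_congr rfl hcval, Finset.sum_const, nsmul_eq_mul,
          ← hTmax]
      have hμm : μ = (((maxF (suppF c)).card : ℝ))⁻¹ := by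
        rw [inv_eq_one_div, eq_div_iff (ne_of_gt hmR)]
        linear_combination ht1
      refine ⟨fun Y => if Y = X then 1 else 0, ?_, ?_, ?_, ?_, ?_, X, hlub, ?_⟩
      · intro v
        by_cases hv : v = X
        · simp [hv]
        · simp [if_neg hv]
      · have hsupp : suppF (fun Y => if Y = X then (1:ℝ) else 0) = {X} := by
          ext Y
          rw [mem_suppF, Finset.mem_singleton]
          by_cases hY : Y = X
          · simp [hY]
          · simp [if_neg hY, hY]
        rw [hsupp]
        intro a ha b hb hne'
        exfalso
        rw [Finset.coe_singleton, Set.mem_singleton_iff] at ha hb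
        exact hne' (ha.trans hb.symm)
      · intro hmem
        have hsupp : suppF (fun Y => if Y = X then (1:ℝ) else 0) = {X} := by
          ext Y
          rw [mem_suppF, Finset.mem_singleton]
          by_cases hY : Y = X
          · simp [hY]
          · simp [if_neg hY, hY]
        rw [hsupp, Finset.mem_singleton] at hmem
        exact hXbot hmem.symm
      · show (∑ v : L, if v = X then (1:ℝ) else 0) = 1
        rw [Finset.sum_ite_eq' Finset.univ X (fun _ => (1:ℝ)), if_pos (Finset.mem_univ X)]
      · funext y
        have e1 : ∀ Y : L, (if Y = X then (1:ℝ) else 0) * wtf G Y y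
            = if Y = X then wtf G X y else 0 := by
          intro Y
          by_cases hY : Y = X
          · subst hY; simp
          · simp [if_neg hY]
        show (∑ Y : L, (if Y = X then (1:ℝ) else 0) * wtf G Y y) = c y
        rw [Finset.sum_congr rfl (fun Y _ => e1 Y),
          Finset.sum_ite_eq' Finset.univ X (fun _ => wtf G X y), if_pos (Finset.mem_univ X),
          hwt y]
        by_cases hy : y ∈ maxF (suppF c)
        · rw [if_pos hy, ← hμm]
          exact (hcval y (maxF_subset hy)).symm
        · rw [if_neg hy]
          by_contra hcy
          have : y ∈ suppF c := mem_suppF.mpr (fun h => hcy h.symm)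
          exact hy (hTmax ▸ this)
      · intro Y hY
        have hY' : (if Y = X then (1:ℝ) else 0) ≠ 0 := hY
        by_cases hYX : Y = X
        · exact le_of_eq hYX
        · exfalso; exact hY' (if_neg hYX)
    · -- recursive case
      have hT'ne : T'.Nonempty := Finset.nonempty_iff_ne_empty.mpr hT'e
      have hsum_max_le : ∑ g ∈ maxF (suppF c), c g ≤ ∑ v ∈ suppF c, c v :=
        Finset.sum_le_sum_of_subset_of_nonneg maxF_subset (fun i _ _ => hc0 i)
      have ht_le : t ≤ ∑ g ∈ maxF (suppF c), c g := by
        rw [htdef]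
        calc ((maxF (suppF c)).card : ℝ) * μ = ∑ _g ∈ maxF (suppF c), μ := by
              rw [Finset.sum_const, nsmul_eq_mul]
        _ ≤ ∑ g ∈ maxF (suppF c), c g := Finset.sum_le_sum hμle
      have htle1 : t ≤ 1 := by rw [← hsumT]; exact le_trans ht_le hsum_max_le
      have hlt : t < 1 := by
        rcases lt_or_eq_of_le htle1 with h | hteq
        · exact h
        · exfalso
          have e1 : ∑ g ∈ maxF (suppF c), c g = 1 :=
            le_antisymm (hsumT ▸ hsum_max_le) (hteq ▸ ht_le)
          have e2 : ∑ g ∈ maxF (suppF c), (c g - μ) = 0 := by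
            rw [Finset.sum_sub_distrib, e1, Finset.sum_const, nsmul_eq_mul]
            rw [htdef] at hteq
            linarith
          have hallμ : ∀ g ∈ maxF (suppF c), c g = μ := by
            intro g hg
            have := (Finset.sum_eq_zero_iff_of_nonneg
              (fun i hi => sub_nonneg.mpr (hμle i hi))).mp e2 g hg
            linarith
          have e3 : ∑ v ∈ suppF c \ maxF (suppF c), c v = 0 := by
            rw [Finset.sum_sdiff_eq_sub maxF_subset, hsumT, e1]
            ring
          have hTmax : ∀ v ∈ suppF c, v ∈ maxF (suppF c) := by
            intro v hv
            by_contra hvm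
            have h0 : c v = 0 := (Finset.sum_eq_zero_iff_of_nonneg (fun i _ => hc0 i)).mp e3 v
              (Finset.mem_sdiff.mpr ⟨hv, hvm⟩)
            exact (mem_suppF.mp hv) h0
          apply hT'e
          rw [hT'def, Finset.sdiff_eq_empty_iff_subset]
          intro v hv
          rw [hDdef]
          exact Finset.mem_filter.mpr ⟨hTmax v hv, hallμ v (hTmax v hv)⟩
      have h1tpos : (0 : ℝ) < 1 - t := by linarith
      have h1t : (1 : ℝ) - t ≠ 0 := ne_of_gt h1tpos
      set c' := fun v => (c v - t * wtf G X v) / (1 - t) with hc'def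
      have htwt : ∀ v : L, t * wtf G X v = if v ∈ maxF (suppF c) then μ else 0 := by
        intro v
        rw [hwt v]
        by_cases hv : v ∈ maxF (suppF c)
        · rw [if_pos hv, if_pos hv, htdef]
          field_simp
        · rw [if_neg hv, if_neg hv, mul_zero]
      have hc'0 : ∀ v, 0 ≤ c' v := by
        intro v
        rw [hc'def]
        refine div_nonneg ?_ (le_of_lt h1tpos)
        rw [htwt v]
        by_cases hv : v ∈ maxF (suppF c)
        · rw [if_pos hv]; linarith [hμle v hv]
        · rw [if_neg hv]; linarith [hc0 v]
      have hc'supp : suppF c' = T' := by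
        ext v
        rw [mem_suppF, hT'def, Finset.mem_sdiff]
        have hd : c' v ≠ 0 ↔ c v - t * wtf G X v ≠ 0 := by
          have hrfl : c' v = (c v - t * wtf G X v) / (1 - t) := rfl
          rw [hrfl, div_ne_zero_iff]
          exact ⟨fun h => h.1, fun h => ⟨h, h1t⟩⟩
        rw [hd, htwt v]
        by_cases hv : v ∈ maxF (suppF c)
        · rw [if_pos hv]
          constructor
          · intro h
            refine ⟨maxF_subset hv, ?_⟩
            rw [hDdef, Finset.mem_filter]
            rintro ⟨_, hcv⟩
            exact h (by rw [hcv]; ring)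
          · rintro ⟨_, hvD⟩ h
            refine hvD ?_
            rw [hDdef, Finset.mem_filter]
            exact ⟨hv, by linarith [sub_eq_zero.mp h]⟩
        · rw [if_neg hv]
          constructor
          · intro h
            refine ⟨mem_suppF.mpr (by simpa using h), ?_⟩
            intro hvD
            exact hv (Finset.filter_subset _ _ (hDdef ▸ hvD))
          · rintro ⟨hvT, _⟩
            simpa using mem_suppF.mp hvT
      have hc's : (∑ v : L, c' v) = 1 := by
        show (∑ v : L, (c v - t * wtf G X v) / (1 - t)) = 1
        rw [← Finset.sum_div, Finset.sum_sub_distrib, ← Finset.mul_sum, hcs,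
          sum_wtf hG hXbot, mul_one, div_self h1t]
      have hT'T : T' ⊆ suppF c := by rw [hT'def]; exact Finset.sdiff_subset
      have hc'nested : IsNested G (suppF c') := by
        rw [hc'supp]; exact nested_subset hnested hT'T
      have hc'card : (suppF c').card ≤ n := by
        rw [hc'supp]
        have hss : T' ⊂ suppF c := by
          refine (Finset.ssubset_iff_of_subset hT'T).mpr ?_
          exact ⟨g0, maxF_subset hg0m, by rw [hT'def]; simp [hg0D]⟩
        have := Finset.card_lt_card hss
        omega
      obtain ⟨f', hf'0, hf'c, hf'b, hf's, hf'Phi, X', hX'lub, hX'supp⟩ :=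
        ih c' hc'card (by rw [hc'supp]; exact hT'ne) hc'nested hc'0 hc's
      rw [hc'supp] at hX'lub
      have hX'X : X' ≤ X := hX'lub.2 (fun a ha => hlub.1 (Finset.mem_coe.mpr
        (hT'T (Finset.mem_coe.mp ha))))
      have hX'ne : X' ≠ X := by
        intro he
        obtain ⟨X'', hlub'', hfac''⟩ := nested_lub hG (nested_subset hnested hT'T) hT'ne
        have hXX'' : X'' = X' := hlub''.unique hX'lub
        rw [hXX'', he] at hfac''
        have : g0 ∈ ((maxF T' : Finset L) : Set L) := by
          rw [← hfac'', hfac]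
          exact Finset.mem_coe.mpr hg0m
        have hg0T' : g0 ∈ T' := maxF_subset (Finset.mem_coe.mp this)
        rw [hT'def] at hg0T'
        exact (Finset.mem_sdiff.mp hg0T').2 hg0D
      have hf'X : f' X = 0 := by
        by_contra h
        exact hX'ne (le_antisymm hX'X (hX'supp X h))
      refine ⟨fun Y => if Y = X then t else (1 - t) * f' Y, ?_, ?_, ?_, ?_, ?_, X, hlub, ?_⟩
      · intro v
        show 0 ≤ if v = X then t else (1 - t) * f' v
        by_cases hv : v = X
        · rw [if_pos hv]; exact le_of_lt htpos
        · rw [if_neg hv]; exact mul_nonneg (le_of_lt h1tpos) (hf'0 v)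
      · have hsupp : suppF (fun Y => if Y = X then t else (1 - t) * f' Y)
            = insert X (suppF f') := by
          ext Y
          rw [mem_suppF, Finset.mem_insert, mem_suppF]
          by_cases hY : Y = X
          · simp [hY, ne_of_gt htpos]
          · simp [hY, mul_ne_zero_iff, h1t]
        rw [hsupp]
        intro a ha b hb hne'
        rw [Finset.coe_insert, Set.mem_insert_iff] at ha hb
        rcases ha with rfl | ha
        · rcases hb with rfl | hb
          · exact absurd rfl hne'
          · exact Or.inr (le_trans (hX'supp b (mem_suppF.mp (Finset.mem_coe.mp hb))) hX'X)
        · rcases hb with rfl | hb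
          · exact Or.inl (le_trans (hX'supp a (mem_suppF.mp (Finset.mem_coe.mp ha))) hX'X)
          · exact hf'c (Finset.mem_coe.mpr (Finset.mem_coe.mp ha))
              (Finset.mem_coe.mpr (Finset.mem_coe.mp hb)) hne'
      · intro hmem
        rw [mem_suppF] at hmem
        have hmem' : (if (⊥ : L) = X then t else (1 - t) * f' ⊥) ≠ 0 := hmem
        by_cases hb : (⊥ : L) = X
        · exact hXbot hb.symm
        · rw [if_neg hb] at hmem'
          have : f' ⊥ ≠ 0 := by
            intro h; exact hmem' (by rw [h, mul_zero])
          exact hf'b (mem_suppF.mpr this)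
      · show (∑ v : L, if v = X then t else (1 - t) * f' v) = 1
        have hsplit := sum_split f' t X hf'X (fun _ => (1 : ℝ))
        simp only [mul_one] at hsplit
        rw [hsplit, hf's]
        ring
      · funext y
        show (∑ Y : L, (if Y = X then t else (1 - t) * f' Y) * wtf G Y y) = c y
        rw [sum_split f' t X hf'X (fun Y => wtf G Y y)]
        have e0 : (∑ Y : L, f' Y * wtf G Y y) = Phi G f' y := rfl
        have e2 : c' y = (c y - t * wtf G X y) / (1 - t) := rfl
        rw [e0, hf'Phi, e2]
        field_simp
        ring
      · intro Y hY
        have hY' : (if Y = X then t else (1 - t) * f' Y) ≠ 0 := hY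
        by_cases hYX : Y = X
        · exact le_of_eq hYX
        · rw [if_neg hYX] at hY'
          have : f' Y ≠ 0 := by
            intro h; exact hY' (by rw [h, mul_zero])
          exact le_trans (hX'supp Y this) hX'X

/-- The geometric realization predicate defines a compact subset of `L → ℝ`. -/
lemma geomReal_isCompact (K : Set (Finset L)) :
    IsCompact {f : L → ℝ | (∀ v, 0 ≤ f v) ∧
      ∃ s ∈ K, (∀ v, f v ≠ 0 → v ∈ s) ∧ ∑ v ∈ s, f v = 1} := by
  set S := {f : L → ℝ | (∀ v, 0 ≤ f v) ∧
      ∃ s ∈ K, (∀ v, f v ≠ 0 → v ∈ s) ∧ ∑ v ∈ s, f v = 1} with hS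
  have hsub : S ⊆ Set.pi Set.univ (fun _ : L => Set.Icc (0 : ℝ) 1) := by
    rintro f ⟨h0, s, _, hsupp, hsum⟩ v _
    refine ⟨h0 v, ?_⟩
    by_cases hv : f v = 0
    · rw [hv]; exact zero_le_one
    · calc f v ≤ ∑ w ∈ s, f w :=
            Finset.single_le_sum (fun w _ => h0 w) (hsupp v hv)
      _ = 1 := hsum
  have hclosed : IsClosed S := by
    have hSeq : S = {f : L → ℝ | ∀ v, 0 ≤ f v} ∩
        ⋃ s ∈ K, {f : L → ℝ | (∀ v, v ∉ s → f v = 0) ∧ ∑ v ∈ s, f v = 1} := by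
      ext f
      simp only [hS, Set.mem_inter_iff, Set.mem_setOf_eq, Set.mem_iUnion, exists_prop]
      constructor
      · rintro ⟨h0, s, hsK, hsupp, hsum⟩
        exact ⟨h0, s, hsK, fun v hv => by_contra fun h => hv (hsupp v h), hsum⟩
      · rintro ⟨h0, s, hsK, hz, hsum⟩
        exact ⟨h0, s, hsK, fun v hv => by_contra fun h => hv (hz v h), hsum⟩
    rw [hSeq]
    refine IsClosed.inter ?_ ?_
    · have : {f : L → ℝ | ∀ v, 0 ≤ f v} = ⋂ v : L, {f : L → ℝ | 0 ≤ f v} := by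
        ext f; simp [Set.mem_iInter]
      rw [this]
      exact isClosed_iInter fun v => isClosed_le continuous_const (continuous_apply v)
    · refine Set.Finite.isClosed_biUnion (Set.toFinite K) ?_
      intro s _
      have : {f : L → ℝ | (∀ v, v ∉ s → f v = 0) ∧ ∑ v ∈ s, f v = 1}
          = (⋂ v : L, {f : L → ℝ | v ∉ s → f v = 0}) ∩ {f : L → ℝ | ∑ v ∈ s, f v = 1} := by
        ext f; simp [Set.mem_iInter]
      rw [this]
      refine IsClosed.inter (isClosed_iInter fun v => ?_)
        (isClosed_eq (continuous_finset_sum s (fun v _ => continuous_apply v)) continuous_const)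
      by_cases hv : v ∈ s
      · have : {f : L → ℝ | v ∉ s → f v = 0} = Set.univ := by
          ext f; simp [hv]
        rw [this]; exact isClosed_univ
      · have : {f : L → ℝ | v ∉ s → f v = 0} = {f : L → ℝ | f v = 0} := by
          ext f; simp [hv]
        rw [this]
        exact isClosed_eq (continuous_apply v) continuous_const
  exact IsCompact.of_isClosed_subset (isCompact_univ_pi (fun _ => isCompact_Icc)) hclosed hsub

end Stmt18Aux

/-- For a finite atomic meet-semilattice `L` and building set `G`,
the nested set complex `N(L,G)` is homeomorphic to the order complex
`Δ(L \ {⊥})`. -/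
theorem stmt18 (L : Type*) [SemilatticeInf L] [OrderBot L] [Fintype L]
    (hAtomic : ∀ X : L, IsLUB {a : L | IsAtom a ∧ a ≤ X} X)
    (G : Set L) (hG : IsBuilding L G) :
    Nonempty (geomReal (nestedComplex G) ≃ₜ geomReal (orderComplexBot L)) := by
  classical
  have hOC : ∀ x : geomReal (orderComplexBot L),
      (∀ v, 0 ≤ x.1 v) ∧ IsChain (· ≤ ·) ((Stmt18Aux.suppF x.1 : Finset L) : Set L) ∧
      ((⊥ : L) ∉ Stmt18Aux.suppF x.1) ∧ (∑ v : L, x.1 v) = 1 := by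
    rintro ⟨f, h0, s, hsK, hsupp, hsum⟩
    have hsub : Stmt18Aux.suppF f ⊆ s := fun v hv => hsupp v (Stmt18Aux.mem_suppF.mp hv)
    refine ⟨h0, ?_, ?_, ?_⟩
    · exact hsK.2.mono (by exact_mod_cast hsub)
    · intro hb
      exact (hsK.1 (Finset.mem_coe.mpr (hsub hb))) rfl
    · rw [← Stmt18Aux.sum_eq_total (fun v hv => hsupp v hv)]
      exact hsum
  have hmem : ∀ x : geomReal (orderComplexBot L),
      (∀ v, 0 ≤ Stmt18Aux.Phi G x.1 v) ∧ ∃ s ∈ nestedComplex G,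
        (∀ v, Stmt18Aux.Phi G x.1 v ≠ 0 → v ∈ s) ∧ ∑ v ∈ s, Stmt18Aux.Phi G x.1 v = 1 := by
    intro x
    obtain ⟨h0, hchain, hbot, hsum⟩ := hOC x
    have hfb : x.1 ⊥ = 0 := by
      by_contra h
      exact hbot (Stmt18Aux.mem_suppF.mpr h)
    have hsupp' : ∀ v, Stmt18Aux.Phi G x.1 v ≠ 0 → v ∈ Stmt18Aux.FFU G (Stmt18Aux.suppF x.1) := by
      intro v hv
      have hmem2 : v ∈ Stmt18Aux.suppF (Stmt18Aux.Phi G x.1) := Stmt18Aux.mem_suppF.mpr hv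
      rwa [Stmt18Aux.suppF_Phi h0] at hmem2
    refine ⟨fun v => Stmt18Aux.Phi_nonneg h0 v, Stmt18Aux.FFU G (Stmt18Aux.suppF x.1),
      Stmt18Aux.nested_chain_union hG hchain hbot, hsupp', ?_⟩
    rw [Stmt18Aux.sum_eq_total hsupp', Stmt18Aux.sum_Phi hG hfb, hsum]
  let F : geomReal (orderComplexBot L) → geomReal (nestedComplex G) :=
    fun x => ⟨Stmt18Aux.Phi G x.1, hmem x⟩
  have hinj : Function.Injective F := by
    intro a b hab
    have h1 : Stmt18Aux.Phi G a.1 = Stmt18Aux.Phi G b.1 := congrArg Subtype.val hab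
    obtain ⟨ha0, hac, hab', has⟩ := hOC a
    obtain ⟨hb0, hbc, hbb, hbs⟩ := hOC b
    exact Subtype.ext (Stmt18Aux.Phi_inj_aux hG (Stmt18Aux.suppF a.1).card a.1 b.1 le_rfl
      ha0 hac hab' has hb0 hbc hbb hbs h1)
  have hsurj : Function.Surjective F := by
    rintro ⟨c, hc0, s, hsK, hsupp, hsum⟩
    have hsub : Stmt18Aux.suppF c ⊆ s := fun v hv => hsupp v (Stmt18Aux.mem_suppF.mp hv)
    have hcs : (∑ v : L, c v) = 1 := by
      rw [← Stmt18Aux.sum_eq_total (fun v hv => hsupp v hv)]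
      exact hsum
    have hnested : IsNested G (Stmt18Aux.suppF c) := Stmt18Aux.nested_subset hsK hsub
    have hne := Stmt18Aux.suppF_nonempty_of_sum_one hcs
    obtain ⟨f, hf0, hfc, hfb, hfs, hfPhi, -⟩ :=
      Stmt18Aux.Phi_surj_aux hG (Stmt18Aux.suppF c).card c le_rfl hne hnested hc0 hcs
    refine ⟨⟨f, hf0, Stmt18Aux.suppF f, ⟨?_, hfc⟩,
      fun v hv => Stmt18Aux.mem_suppF.mpr hv, ?_⟩, ?_⟩
    · intro v hv
      exact fun h => hfb (h ▸ (Finset.mem_coe.mp hv))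
    · rw [Stmt18Aux.sum_eq_total (fun v hv => Stmt18Aux.mem_suppF.mpr hv)]
      exact hfs
    · exact Subtype.ext hfPhi
  have hcont : Continuous F := by
    refine Continuous.subtype_mk ?_ _
    apply continuous_pi
    intro g
    simp only [Stmt18Aux.Phi]
    exact continuous_finset_sum _ (fun X _ =>
      ((continuous_apply X).comp continuous_subtype_val).mul continuous_const)
  haveI hcomp : CompactSpace (geomReal (orderComplexBot L)) :=
    isCompact_iff_compactSpace.mp (Stmt18Aux.geomReal_isCompact (orderComplexBot L))
  let e : geomReal (orderComplexBot L) ≃ geomReal (nestedComplex G) :=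
    Equiv.ofBijective F ⟨hinj, hsurj⟩
  have hce : Continuous e := hcont
  exact ⟨hce.homeoOfEquivCompactToT2.symm⟩
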